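/- Assuming FS0–FS2, the non-existence clause of FS1 can be strengthened: for every Op¹ event a, there is no event b with Rem(b), χ(b)≠f, γ(a) <₀ b <₀ a, and kval(b)=kval(a). -/
import Mathlib


/-- Status of an event: 0, 1, or f (failed). -/
inductive Status | s0 | s1 | sf
deriving DecidableEq

open Status

/-- Assuming FS0–FS2, the non-existence clause of FS1 can be
strengthened: for every Op¹ event a, there is no event b with Rem(b), χ(b)≠f,
γ(a) <₀ b <₀ a, and kval(b)=kval(a). -/
theorem stmt1
    (Add Rem Cnt : ℕ → Prop) (kval : ℕ → ℕ) (χ : ℕ → Status) (γ : ℕ → ℕ)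
    (FS0 : ∀ e, ¬ (Add e ∧ Rem e) ∧ ¬ (Add e ∧ Cnt e) ∧ ¬ (Rem e ∧ Cnt e))
    (FS1 : ∀ a, χ a = s1 →
      γ a < a ∧ Add (γ a) ∧ χ (γ a) = s0 ∧ kval (γ a) = kval a ∧
      ¬ ∃ r, Rem r ∧ χ r = s1 ∧ γ r = γ a ∧ γ a < r ∧ r < a)
    (FS2 : ∀ a b, a < b → Add a → χ a = s0 → χ b = s0 → kval a = kval b →
      ∃ r, a < r ∧ r < b ∧ Rem r ∧ χ r = s1 ∧ γ r = a) :
    ∀ a, χ a = s1 →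
      ¬ ∃ b, Rem b ∧ χ b ≠ sf ∧ γ a < b ∧ b < a ∧ kval b = kval a := by
  intro a ha
  rintro ⟨b, hRb, hbf, hgab, hba, hk⟩
  obtain ⟨hga, hAga, hχga, hkga, hno⟩ := FS1 a ha
  cases hb : χ b with
  | sf => exact hbf hb
  | s0 =>
    obtain ⟨r, hr1, hr2, hRr, hχr, hγr⟩ :=
      FS2 (γ a) b hgab hAga hχga hb (by rw [hkga, ← hk])
    exact hno ⟨r, hRr, hχr, hγr, hr1, hr2.trans hba⟩
  | s1 =>
    obtain ⟨hgb, hAgb, hχgb, hkgb, hnob⟩ := FS1 b hb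
    rcases lt_trichotomy (γ a) (γ b) with h | h | h
    · obtain ⟨r, hr1, hr2, hRr, hχr, hγr⟩ :=
        FS2 (γ a) (γ b) h hAga hχga hχgb (by rw [hkga, hkgb, hk])
      exact hno ⟨r, hRr, hχr, hγr, hr1, (hr2.trans hgb).trans hba⟩
    · exact hno ⟨b, hRb, hb, h.symm, hgab, hba⟩
    · obtain ⟨r, hr1, hr2, hRr, hχr, hγr⟩ :=
        FS2 (γ b) (γ a) h hAgb hχgb hχga (by rw [hkga, hkgb, hk])
      exact hnob ⟨r, hRr, hχr, hγr, hr1, hr2.trans hgab⟩
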